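/- The bipartite negativity of any state ρ on C² ⊗ H (one qubit versus the rest) is at most 1/2, i.e., the sum of absolute values of the negative eigenvalues of ρ^{T_A} is at most 1/2, with equality attained for the Bell state (|00⟩+|11⟩)/√2. -/

import Mathlib

open Matrix ComplexOrder

/-- Partial transposition on the first tensor factor, in a fixed product basis. -/
def ptA {α β : Type*} (ρ : Matrix (α × β) (α × β) ℂ) : Matrix (α × β) (α × β) ℂ :=
  Matrix.of fun p q => ρ (q.1, p.2) (p.1, q.2)

/-- The Bell state `(|00⟩ + |11⟩)/√2`. -/
noncomputable def bell : Fin 2 × Fin 2 → ℂ :=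
  fun p => if p.1 = p.2 then (1 / Real.sqrt 2 : ℂ) else 0

-- trace swap
lemma trace_ptA_mul {α β : Type*} [Fintype α] [Fintype β]
    (X Y : Matrix (α × β) (α × β) ℂ) :
    (ptA X * Y).trace = (X * ptA Y).trace := by
  have h1 : (ptA X * Y).trace = ∑ z : (α × β) × (α × β), (ptA X) z.1 z.2 * Y z.2 z.1 := by
    rw [Fintype.sum_prod_type]
    simp [Matrix.trace, Matrix.diag, Matrix.mul_apply]
  have h2 : (X * ptA Y).trace = ∑ z : (α × β) × (α × β), X z.1 z.2 * (ptA Y) z.2 z.1 := by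
    rw [Fintype.sum_prod_type]
    simp [Matrix.trace, Matrix.diag, Matrix.mul_apply]
  rw [h1, h2]
  refine Fintype.sum_equiv ⟨fun z => ((z.2.1, z.1.2), (z.1.1, z.2.2)),
    fun z => ((z.2.1, z.1.2), (z.1.1, z.2.2)), fun z => rfl, fun z => rfl⟩ _ _ ?_
  intro z
  simp [ptA]


lemma ptA_isHermitian {α β : Type*} {Q : Matrix (α × β) (α × β) ℂ} (hQ : Q.IsHermitian) :
    (ptA Q).IsHermitian := by
  ext p q
  simp only [Matrix.conjTranspose_apply, ptA, Matrix.of_apply]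
  exact hQ.apply _ _

lemma herm_dot {n : Type*} [Fintype n] {Q : Matrix n n ℂ} (hQ : Q.IsHermitian)
    (u v : n → ℂ) : star u ⬝ᵥ Q *ᵥ v = star (star v ⬝ᵥ Q *ᵥ u) := by
  simp only [dotProduct, Matrix.mulVec, Pi.star_apply, star_sum, star_mul', star_star,
    Finset.mul_sum]
  conv_rhs => rw [Finset.sum_comm]
  refine Finset.sum_congr rfl fun p _ => Finset.sum_congr rfl fun q _ => ?_
  rw [← hQ.apply p q]
  ring

lemma re_dot_le {β : Type*} [Fintype β] (u v : β → ℂ) :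
    |(∑ a, star (u a) * v a).re| ≤
      Real.sqrt (∑ a, Complex.normSq (u a)) * Real.sqrt (∑ a, Complex.normSq (v a)) := by
  have h1 : |(∑ a, star (u a) * v a).re| ≤ ∑ a, ‖u a‖ * ‖v a‖ := by
    calc |(∑ a, star (u a) * v a).re| ≤ ‖∑ a, star (u a) * v a‖ :=
          Complex.abs_re_le_norm _
    _ ≤ ∑ a, ‖star (u a) * v a‖ := norm_sum_le _ _
    _ = ∑ a, ‖u a‖ * ‖v a‖ := by
        simp [norm_mul, Complex.star_def, Complex.norm_conj]
  have h2 : (∑ a, ‖u a‖ * ‖v a‖) ^ 2 ≤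
      (∑ a, Complex.normSq (u a)) * (∑ a, Complex.normSq (v a)) := by
    have := Finset.sum_mul_sq_le_sq_mul_sq Finset.univ (fun a => ‖u a‖)
      (fun a => ‖v a‖)
    simpa [Complex.sq_norm] using this
  have h3 : (∑ a, ‖u a‖ * ‖v a‖) ≤
      Real.sqrt ((∑ a, Complex.normSq (u a)) * (∑ a, Complex.normSq (v a))) := by
    have hnn : 0 ≤ ∑ a, ‖u a‖ * ‖v a‖ :=
      Finset.sum_nonneg fun a _ => mul_nonneg (norm_nonneg _) (norm_nonneg _)
    calc (∑ a, ‖u a‖ * ‖v a‖)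
        = Real.sqrt ((∑ a, ‖u a‖ * ‖v a‖) ^ 2) := by
          rw [Real.sqrt_sq hnn]
    _ ≤ _ := Real.sqrt_le_sqrt h2
  rw [← Real.sqrt_mul (Finset.sum_nonneg fun a _ => Complex.normSq_nonneg _)]
  exact h1.trans h3

lemma final_real (t0 t1 r X Y G0 : ℝ) (ht0 : 0 ≤ t0) (ht1 : 0 ≤ t1)
    (hXnn : 0 ≤ X) (hYnn : 0 ≤ Y)
    (hr : |r| ≤ Y * G0) (hG0 : G0 ≤ X / 2) :
    0 ≤ t0 + t1 + (r + r) + (X ^ 2 + Y ^ 2) / 2 := by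
  have h1 : -(Y * G0) ≤ r := by
    have := neg_abs_le r
    linarith
  have h2 : Y * G0 ≤ Y * (X / 2) := mul_le_mul_of_nonneg_left hG0 hYnn
  nlinarith [sq_nonneg (X - Y)]

lemma key_psd {β : Type*} [Fintype β] [DecidableEq β]
    (Q : Matrix (Fin 2 × β) (Fin 2 × β) ℂ) (hQ : Q.IsHermitian) (hQQ : Q * Q = Q) :
    (ptA Q + ((1/2 : ℝ) : ℂ) • 1).PosSemidef := by
  have hQpsd : Q.PosSemidef := by
    have h : Q = Qᴴ * Q := by rw [hQ.eq, hQQ]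
    have h2 := Matrix.posSemidef_conjTranspose_mul_self Q
    rwa [← h] at h2
  refine Matrix.PosSemidef.of_dotProduct_mulVec_nonneg ?_ ?_
  · refine (ptA_isHermitian hQ).add ?_
    unfold Matrix.IsHermitian
    rw [Matrix.conjTranspose_smul, Matrix.conjTranspose_one]
    norm_num
  intro w
  set e0 : Fin 2 × β → ℂ := fun p => if p.1 = 0 then w p else 0 with he0
  set e1 : Fin 2 × β → ℂ := fun p => if p.1 = 1 then w p else 0 with he1
  set f0 : Fin 2 × β → ℂ := fun p => if p.1 = 1 then w (0, p.2) else 0 with hf0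
  set f1 : Fin 2 × β → ℂ := fun p => if p.1 = 0 then w (1, p.2) else 0 with hf1
  set g : Fin 2 × β → ℂ := Q *ᵥ f0 with hg
  -- split identity
  have hsplit : star w ⬝ᵥ (ptA Q) *ᵥ w =
      (star e0 ⬝ᵥ Q *ᵥ e0) + (star e1 ⬝ᵥ Q *ᵥ e1)
      + (star f0 ⬝ᵥ Q *ᵥ f1) + (star f1 ⬝ᵥ Q *ᵥ f0) := by
    simp only [he0, he1, hf0, hf1, dotProduct, Matrix.mulVec, Pi.star_apply, ptA,
      Matrix.of_apply, Fintype.sum_prod_type, Fin.sum_univ_two, Finset.mul_sum, Fin.isValue]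
    simp only [mul_add, Finset.sum_add_distrib, if_true, one_ne_zero, zero_ne_one, if_false,
      star_zero, zero_mul, mul_zero, Finset.sum_const_zero, add_zero, zero_add]
    ring
  -- T10 and f0-dot-g explicit
  have hT10 : star f1 ⬝ᵥ Q *ᵥ f0 = ∑ a, star (w (1, a)) * g (0, a) := by
    rw [← hg]
    simp only [hf1, dotProduct, Pi.star_apply, Fintype.sum_prod_type, Fin.sum_univ_two,
      Fin.isValue, if_true, one_ne_zero, if_false, star_zero, zero_mul, Finset.sum_const_zero,
      add_zero]
  have hf0g : star f0 ⬝ᵥ Q *ᵥ f0 = ∑ a, star (w (0, a)) * g (1, a) := by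
    rw [← hg]
    simp only [hf0, dotProduct, Pi.star_apply, Fintype.sum_prod_type, Fin.sum_univ_two,
      Fin.isValue, if_true, one_ne_zero, zero_ne_one, if_false, star_zero, zero_mul,
      Finset.sum_const_zero, add_zero, zero_add]
  -- g self dot
  have hgg : star g ⬝ᵥ g = star f0 ⬝ᵥ Q *ᵥ f0 := by
    rw [hg, Matrix.star_mulVec, ← Matrix.dotProduct_mulVec, Matrix.mulVec_mulVec, hQ.eq, hQQ]
  -- real quantities
  set sx : ℝ := ∑ a, Complex.normSq (w (0, a)) with hsx
  set sy : ℝ := ∑ a, Complex.normSq (w (1, a)) with hsy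
  set s0 : ℝ := ∑ a, Complex.normSq (g (0, a)) with hs0
  set s1 : ℝ := ∑ a, Complex.normSq (g (1, a)) with hs1
  have hsxnn : 0 ≤ sx := Finset.sum_nonneg fun a _ => Complex.normSq_nonneg _
  have hsynn : 0 ≤ sy := Finset.sum_nonneg fun a _ => Complex.normSq_nonneg _
  have hs0nn : 0 ≤ s0 := Finset.sum_nonneg fun a _ => Complex.normSq_nonneg _
  have hs1nn : 0 ≤ s1 := Finset.sum_nonneg fun a _ => Complex.normSq_nonneg _
  set X : ℝ := Real.sqrt sx with hX
  set Y : ℝ := Real.sqrt sy with hY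
  set G0 : ℝ := Real.sqrt s0 with hG0d
  set G1 : ℝ := Real.sqrt s1 with hG1d
  have hXnn : 0 ≤ X := Real.sqrt_nonneg _
  have hYnn : 0 ≤ Y := Real.sqrt_nonneg _
  have hG1nn : 0 ≤ G1 := Real.sqrt_nonneg _
  have hG1sq : G1 ^ 2 = s1 := Real.sq_sqrt hs1nn
  have hXsq : X ^ 2 = sx := Real.sq_sqrt hsxnn
  have hYsq : Y ^ 2 = sy := Real.sq_sqrt hsynn
  have hr : |(star f1 ⬝ᵥ Q *ᵥ f0).re| ≤ Y * G0 := by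
    rw [hT10]
    exact re_dot_le (fun a => w (1, a)) (fun a => g (0, a))
  have hs01 : s0 + s1 ≤ X * G1 := by
    have h1 : star g ⬝ᵥ g = ((s0 + s1 : ℝ) : ℂ) := by
      simp only [dotProduct, Pi.star_apply, Fintype.sum_prod_type, Fin.sum_univ_two,
        Complex.star_def]
      push_cast [hs0, hs1]
      simp [Complex.normSq_eq_conj_mul_self]
    have h2 : ((s0 + s1 : ℝ) : ℂ).re = (∑ a, star (w (0, a)) * g (1, a)).re := by
      rw [← h1, hgg, hf0g]
    have h3 := re_dot_le (fun a => w (0, a)) (fun a => g (1, a))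
    rw [← h2] at h3
    simpa using (le_abs_self _).trans h3
  have hs0' : s0 ≤ X ^ 2 / 4 := by nlinarith [sq_nonneg (X - 2 * G1)]
  have hG0le : G0 ≤ X / 2 := by
    have h4 := Real.sqrt_le_sqrt hs0'
    rwa [show X ^ 2 / 4 = (X / 2) ^ 2 by ring, Real.sqrt_sq (by positivity), ← hG0d] at h4
  have h00 := hQpsd.dotProduct_mulVec_nonneg e0
  have h11 := hQpsd.dotProduct_mulVec_nonneg e1
  rw [Complex.le_def] at h00 h11
  have hww : star w ⬝ᵥ w = ((sx + sy : ℝ) : ℂ) := by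
    simp only [dotProduct, Pi.star_apply, Fintype.sum_prod_type, Fin.sum_univ_two,
      Complex.star_def]
    push_cast [hsx, hsy]
    simp [Complex.normSq_eq_conj_mul_self]
  have hgoal : star w ⬝ᵥ (ptA Q + ((1/2 : ℝ) : ℂ) • 1) *ᵥ w
      = (star e0 ⬝ᵥ Q *ᵥ e0) + (star e1 ⬝ᵥ Q *ᵥ e1)
        + (star (star f1 ⬝ᵥ Q *ᵥ f0) + (star f1 ⬝ᵥ Q *ᵥ f0)) + (((sx + sy)/2 : ℝ) : ℂ) := by
    rw [Matrix.add_mulVec, Matrix.smul_mulVec, Matrix.one_mulVec, dotProduct_add,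
      dotProduct_smul, smul_eq_mul, hww, hsplit, herm_dot hQ f0 f1]
    push_cast
    ring
  rw [hgoal, Complex.le_def]
  constructor
  · simp only [Complex.add_re, Complex.zero_re, Complex.ofReal_re, Complex.star_def,
      Complex.conj_re]
    have hfin := final_real ((star e0 ⬝ᵥ Q *ᵥ e0).re) ((star e1 ⬝ᵥ Q *ᵥ e1).re)
      ((star f1 ⬝ᵥ Q *ᵥ f0).re) X Y G0 (by simpa using h00.1) (by simpa using h11.1)
      hXnn hYnn hr hG0le
    rw [hXsq, hYsq] at hfin
    linarith
  · simp only [Complex.add_im, Complex.zero_im, Complex.ofReal_im, Complex.star_def,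
      Complex.conj_im]
    have i00 : (star e0 ⬝ᵥ Q *ᵥ e0).im = 0 := by simpa using h00.2.symm
    have i11 : (star e1 ⬝ᵥ Q *ᵥ e1).im = 0 := by simpa using h11.2.symm
    rw [i00, i11]
    ring

lemma trace_mul_psd_nonneg {n : Type*} [Fintype n] [DecidableEq n]
    {A B : Matrix n n ℂ} (hA : A.PosSemidef) (hB : B.PosSemidef) :
    0 ≤ (A * B).trace := by
  obtain ⟨C, rfl⟩ : ∃ C : Matrix n n ℂ, A = Cᴴ * C := by
    open scoped MatrixOrder in exact CStarAlgebra.nonneg_iff_eq_star_mul_self.mp hA.nonneg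
  rw [Matrix.mul_assoc, Matrix.trace_mul_comm]
  have hP : (C * B * Cᴴ).PosSemidef := hB.mul_mul_conjTranspose_same C
  have h : ∀ p, 0 ≤ (C * B * Cᴴ) p p := by
    intro p
    have h2 := hP.dotProduct_mulVec_nonneg (Pi.single p 1)
    simpa [dotProduct, Pi.single_apply, Finset.sum_ite_eq'] using h2
  calc (0:ℂ) = ∑ _p : n, 0 := by simp
  _ ≤ _ := Finset.sum_le_sum (fun p _ => h p)

lemma trace_eq_sum_eigenvalues {n : Type*} [Fintype n] [DecidableEq n]
    {A : Matrix n n ℂ} (hA : A.IsHermitian) :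
    A.trace = ((∑ i, hA.eigenvalues i : ℝ) : ℂ) := by
  conv_lhs => rw [hA.spectral_theorem]
  simp only [Unitary.conjStarAlgAut_apply, Unitary.coe_star]
  rw [Matrix.trace_mul_cycle]
  rw [show (star (hA.eigenvectorUnitary : Matrix n n ℂ)) * (hA.eigenvectorUnitary : Matrix n n ℂ)
      = 1 from Unitary.coe_star_mul_self hA.eigenvectorUnitary]
  simp [Matrix.trace_diagonal]

lemma bell_ptA_apply (p q : Fin 2 × Fin 2) :
    (ptA (Matrix.of fun p q : Fin 2 × Fin 2 => bell p * star (bell q))) p q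
      = if q.1 = p.2 ∧ p.1 = q.2 then (1/2 : ℂ) else 0 := by
  have hinv : ((Real.sqrt 2 : ℝ) : ℂ)⁻¹ * ((Real.sqrt 2 : ℝ) : ℂ)⁻¹ = (2 : ℂ)⁻¹ := by
    rw [← mul_inv, ← Complex.ofReal_mul, Real.mul_self_sqrt (by norm_num : (0:ℝ) ≤ 2)]
    norm_num
  simp only [ptA, Matrix.of_apply, bell]
  by_cases h1 : q.1 = p.2 <;> by_cases h2 : p.1 = q.2 <;>
    simp [h1, h2, hinv, Complex.star_def, map_div₀, Complex.conj_ofReal, div_mul_div_comm]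

lemma bell_ptA_sq :
    (ptA (Matrix.of fun p q : Fin 2 × Fin 2 => bell p * star (bell q)))
      * (ptA (Matrix.of fun p q : Fin 2 × Fin 2 => bell p * star (bell q)))
      = (1/4 : ℂ) • 1 := by
  ext p q
  simp only [Matrix.mul_apply, bell_ptA_apply, Matrix.smul_apply, Matrix.one_apply,
    Fintype.sum_prod_type, Fin.sum_univ_two]
  rcases p with ⟨i, j⟩; rcases q with ⟨k, l⟩
  fin_cases i <;> fin_cases j <;> fin_cases k <;> fin_cases l <;> norm_num [Prod.ext_iff]

lemma bell_ptA_trace :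
    (ptA (Matrix.of fun p q : Fin 2 × Fin 2 => bell p * star (bell q))).trace = 1 := by
  simp only [Matrix.trace, Matrix.diag, bell_ptA_apply, Fintype.sum_prod_type, Fin.sum_univ_two]
  norm_num

theorem part1 {β : Type*} [Fintype β] [DecidableEq β]
    (ρ : Matrix (Fin 2 × β) (Fin 2 × β) ℂ) (hρ : ρ.PosSemidef) (htr : ρ.trace = 1)
    (hH : (ptA ρ).IsHermitian) :
    (∑ i ∈ Finset.univ.filter (fun i => hH.eigenvalues i < 0), |hH.eigenvalues i|) ≤ 1/2 := by
  classical
  set U : Matrix (Fin 2 × β) (Fin 2 × β) ℂ := (hH.eigenvectorUnitary : Matrix (Fin 2 × β) (Fin 2 × β) ℂ) with hU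
  have hUU : star U * U = 1 := Unitary.coe_star_mul_self hH.eigenvectorUnitary
  set d : (Fin 2 × β) → ℂ := fun i => if hH.eigenvalues i < 0 then 1 else 0 with hd
  set Q : Matrix (Fin 2 × β) (Fin 2 × β) ℂ := U * diagonal d * star U with hQdef
  have hdstar : star d = d := by
    funext i
    simp only [hd, Pi.star_apply]
    split_ifs <;> simp
  have hQherm : Q.IsHermitian := by
    unfold Matrix.IsHermitian
    rw [hQdef]
    simp [Matrix.conjTranspose_mul, Matrix.star_eq_conjTranspose,
      Matrix.conjTranspose_conjTranspose, Matrix.diagonal_conjTranspose, hdstar,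
      Matrix.mul_assoc]
  have hdd : (fun i => d i * d i) = d := by
    funext i
    simp only [hd]
    split_ifs <;> simp
  have hQQ : Q * Q = Q := by
    rw [hQdef]
    calc U * diagonal d * star U * (U * diagonal d * star U)
        = U * diagonal d * (star U * U) * diagonal d * star U := by
          simp only [Matrix.mul_assoc]
    _ = U * (diagonal d * diagonal d) * star U := by
          rw [hUU]; simp only [Matrix.mul_one, Matrix.mul_assoc]
    _ = U * diagonal d * star U := by rw [Matrix.diagonal_mul_diagonal, hdd]
  -- trace of (ptA ρ) * Q
  have htrMQ : ((ptA ρ) * Q).trace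
      = ((∑ i ∈ Finset.univ.filter (fun i => hH.eigenvalues i < 0), hH.eigenvalues i : ℝ) : ℂ) := by
    conv_lhs => rw [hH.spectral_theorem]
    rw [hQdef]
    calc ((U * diagonal (RCLike.ofReal ∘ hH.eigenvalues) * star U) * (U * diagonal d * star U)).trace
        = (U * (diagonal (RCLike.ofReal ∘ hH.eigenvalues) * diagonal d) * star U).trace := by
          rw [show (U * diagonal (RCLike.ofReal ∘ hH.eigenvalues) * star U) * (U * diagonal d * star U)
              = U * diagonal (RCLike.ofReal ∘ hH.eigenvalues) * (star U * U) * diagonal d * star U by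
            simp only [Matrix.mul_assoc], hUU]
          simp only [Matrix.mul_one, Matrix.mul_assoc]
    _ = (diagonal (RCLike.ofReal ∘ hH.eigenvalues) * diagonal d).trace := by
          rw [Matrix.trace_mul_cycle, ← Matrix.mul_assoc, hUU, Matrix.one_mul]
    _ = _ := by
          rw [Matrix.diagonal_mul_diagonal, Matrix.trace_diagonal]
          simp only [Pi.mul_apply, Function.comp_apply, hd, mul_ite, mul_one, mul_zero]
          rw [Finset.sum_ite, Finset.sum_const_zero, add_zero]
          push_cast
          rfl
  have hkey := key_psd Q hQherm hQQ
  have hpos := trace_mul_psd_nonneg hρ hkey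
  rw [Matrix.mul_add, Matrix.trace_add, Matrix.mul_smul, Matrix.mul_one, Matrix.trace_smul, htr,
    ← trace_ptA_mul, htrMQ, smul_eq_mul, mul_one] at hpos
  have hreal : (0:ℝ) ≤ (∑ i ∈ Finset.univ.filter (fun i => hH.eigenvalues i < 0), hH.eigenvalues i) + 1/2 := by
    have : ((((∑ i ∈ Finset.univ.filter (fun i => hH.eigenvalues i < 0), hH.eigenvalues i) + 1/2 : ℝ)) : ℂ)
        = ((∑ i ∈ Finset.univ.filter (fun i => hH.eigenvalues i < 0), hH.eigenvalues i : ℝ) : ℂ) + ((1/2 : ℝ) : ℂ) := by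
      push_cast; ring
    rw [← Complex.zero_le_real, this]
    exact hpos
  have habs : (∑ i ∈ Finset.univ.filter (fun i => hH.eigenvalues i < 0), |hH.eigenvalues i|)
      = - ∑ i ∈ Finset.univ.filter (fun i => hH.eigenvalues i < 0), hH.eigenvalues i := by
    rw [← Finset.sum_neg_distrib]
    refine Finset.sum_congr rfl fun i hi => ?_
    rw [abs_of_neg (Finset.mem_filter.mp hi).2]
  rw [habs]
  linarith

theorem part2 (hB : (ptA (Matrix.of fun p q : Fin 2 × Fin 2 => bell p * star (bell q))).IsHermitian) :
    (∑ i ∈ Finset.univ.filter (fun i => hB.eigenvalues i < 0), |hB.eigenvalues i|) = 1/2 := by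
  classical
  set M := ptA (Matrix.of fun p q : Fin 2 × Fin 2 => bell p * star (bell q)) with hM
  -- each eigenvalue is ±1/2
  have hdich : ∀ j, hB.eigenvalues j = 1/2 ∨ hB.eigenvalues j = -(1/2) := by
    intro j
    have hv := hB.mulVec_eigenvectorBasis j
    have hvne : ⇑(hB.eigenvectorBasis j) ≠ 0 := by
      intro h
      exact hB.eigenvectorBasis.orthonormal.ne_zero j (by ext a; exact congrFun h a)
    obtain ⟨a, ha⟩ := Function.ne_iff.mp hvne
    have h2 : M *ᵥ (M *ᵥ ⇑(hB.eigenvectorBasis j)) = ((hB.eigenvalues j : ℂ) ^ 2) • ⇑(hB.eigenvectorBasis j) := by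
      rw [hv, Matrix.mulVec_smul, hv]
      rw [smul_smul]
      norm_cast
      push_cast
      ring_nf
    have h3 : M *ᵥ (M *ᵥ ⇑(hB.eigenvectorBasis j)) = (1/4 : ℂ) • ⇑(hB.eigenvectorBasis j) := by
      rw [Matrix.mulVec_mulVec, bell_ptA_sq]
      simp [Matrix.smul_mulVec]
    have h4 : ((hB.eigenvalues j : ℂ) ^ 2) * (hB.eigenvectorBasis j) a
        = (1/4 : ℂ) * (hB.eigenvectorBasis j) a := by
      have := congrFun (h2.symm.trans h3) a
      simpa using this
    have h5 : ((hB.eigenvalues j : ℂ) ^ 2) = 1/4 := mul_right_cancel₀ ha h4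
    have h6 : (hB.eigenvalues j) ^ 2 = 1/4 := by
      have h5' : ((hB.eigenvalues j ^ 2 : ℝ) : ℂ) = ((1/4 : ℝ) : ℂ) := by push_cast; exact h5
      exact_mod_cast h5' 
    have h7 : (hB.eigenvalues j - 1/2) * (hB.eigenvalues j + 1/2) = 0 := by
      linear_combination h6
    rcases mul_eq_zero.mp h7 with h | h
    · left; linarith
    · right; linarith
  -- sum of eigenvalues is 1
  have hsum : (∑ i, hB.eigenvalues i) = 1 := by
    have t := trace_eq_sum_eigenvalues hB
    have hMtr : M.trace = 1 := bell_ptA_trace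
    rw [hMtr] at t
    exact_mod_cast t.symm
  -- combinatorics
  set S := Finset.univ.filter (fun i => hB.eigenvalues i < 0) with hS
  have hvalS : ∀ i ∈ S, hB.eigenvalues i = -(1/2) := by
    intro i hi
    rcases hdich i with h | h
    · exfalso; have := (Finset.mem_filter.mp hi).2; rw [h] at this; linarith
    · exact h
  have hvalSc : ∀ i ∈ Finset.univ.filter (fun i => ¬ hB.eigenvalues i < 0),
      hB.eigenvalues i = 1/2 := by
    intro i hi
    rcases hdich i with h | h
    · exact h
    · exfalso; have := (Finset.mem_filter.mp hi).2; rw [h] at this; norm_num at this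
  have hcard : S.card + (Finset.univ.filter (fun i => ¬ hB.eigenvalues i < 0)).card = 4 := by
    rw [Finset.card_filter_add_card_filter_not]
    simp
  have hsum2 : (∑ i, hB.eigenvalues i)
      = (S.card : ℝ) * (-(1/2)) + ((Finset.univ.filter (fun i => ¬ hB.eigenvalues i < 0)).card : ℝ) * (1/2) := by
    rw [← Finset.sum_filter_add_sum_filter_not Finset.univ (fun i => hB.eigenvalues i < 0)]
    rw [Finset.sum_congr rfl hvalS, Finset.sum_congr rfl hvalSc]
    simp [mul_comm]
  have hk : (S.card : ℝ) = 1 := by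
    have hc : ((S.card : ℝ) + ((Finset.univ.filter (fun i => ¬ hB.eigenvalues i < 0)).card : ℝ)) = 4 := by
      exact_mod_cast hcard
    rw [hsum] at hsum2
    linarith
  rw [hS] at *
  calc (∑ i ∈ Finset.univ.filter (fun i => hB.eigenvalues i < 0), |hB.eigenvalues i|)
      = ∑ i ∈ Finset.univ.filter (fun i => hB.eigenvalues i < 0), (1/2 : ℝ) := by
        refine Finset.sum_congr rfl fun i hi => ?_
        rw [hvalS i hi]
        norm_num
  _ = ((Finset.univ.filter (fun i => hB.eigenvalues i < 0)).card : ℝ) * (1/2) := by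
        rw [Finset.sum_const, nsmul_eq_mul]
  _ = 1/2 := by rw [← hS, hk]; norm_num

/-- The bipartite negativity of any state on `ℂ² ⊗ H` (one qubit vs the rest) is at most
`1/2`, with equality attained for the Bell state. -/
theorem stmt11 {β : Type*} [Fintype β] [DecidableEq β]
    (ρ : Matrix (Fin 2 × β) (Fin 2 × β) ℂ) (hρ : ρ.PosSemidef) (htr : ρ.trace = 1)
    (hH : (ptA ρ).IsHermitian) :
    (∑ i ∈ Finset.univ.filter (fun i => hH.eigenvalues i < 0), |hH.eigenvalues i|) ≤ 1/2 ∧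
    ∀ (hB : (ptA (Matrix.of fun p q : Fin 2 × Fin 2 => bell p * star (bell q))).IsHermitian),
      (∑ i ∈ Finset.univ.filter (fun i => hB.eigenvalues i < 0), |hB.eigenvalues i|) = 1/2 := by
  exact ⟨part1 ρ hρ htr hH, fun hB => part2 hB⟩
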